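/- Let Λ = Λ₀ ⊕ Zδ with Λ₀ even unimodular containing at least three orthogonal copies of the hyperbolic plane U and δ² = −2m̃. Let h ∈ Λ be primitive of divisibility γ and positive square. Let k be an integer with 0 ≤ k ≤ m̃ and let l be any integer such that some (equivalently, every) primitive class with square 2l and κ_* = kδ_* exists in Λ. Then there exists a primitive κ ∈ Λ with κ² = 2l, κ_* = kδ_*, and (κ, h) = 0, if and only if γ divides k. -/

import Mathlib

/-- auxiliary: the existence predicate for a hyperbolic pair orthogonal to a
vector with given pairing coordinates in `U³`. -/
def stmt11Cl (Q₁ P₁ Q₂ P₂ Q₃ P₃ : ℤ) : Prop :=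
  ∃ c₁ c₂ c₃ c₁' c₂' c₃' d₁ d₂ d₃ d₁' d₂' d₃' : ℤ,
    c₁*c₁' + c₂*c₂' + c₃*c₃' = 0 ∧
    d₁*d₁' + d₂*d₂' + d₃*d₃' = 0 ∧
    c₁*d₁' + c₂*d₂' + c₃*d₃' + c₁'*d₁ + c₂'*d₂ + c₃'*d₃ = 1 ∧
    c₁*Q₁ + c₂*Q₂ + c₃*Q₃ + c₁'*P₁ + c₂'*P₂ + c₃'*P₃ = 0 ∧
    d₁*Q₁ + d₂*Q₂ + d₃*Q₃ + d₁'*P₁ + d₂'*P₂ + d₃'*P₃ = 0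

lemma stmt11_sl2 (x y : ℤ) : ∃ p q r s : ℤ, p*s - q*r = 1 ∧ r*x + s*y = 0 := by
  rcases eq_or_ne (Int.gcd x y) 0 with h0 | hne
  · obtain ⟨hx, hy⟩ := Int.gcd_eq_zero_iff.mp h0
    exact ⟨1, 0, 0, 1, by ring, by simp [hx, hy]⟩
  · have hgz : (Int.gcd x y : ℤ) ≠ 0 := by exact_mod_cast hne
    obtain ⟨x', hx'⟩ : (Int.gcd x y : ℤ) ∣ x := Int.gcd_dvd_left _ _
    obtain ⟨y', hy'⟩ : (Int.gcd x y : ℤ) ∣ y := Int.gcd_dvd_right _ _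
    refine ⟨Int.gcdA x y, Int.gcdB x y, -y', x', ?_, ?_⟩
    · apply mul_left_cancel₀ hgz
      have h := Int.gcd_eq_gcd_ab x y
      linear_combination -h - Int.gcdA x y * hx' - Int.gcdB x y * hy'
    · linear_combination -y' * hx' + x' * hy' 

lemma stmt11Cl_p23 {a b c d e f : ℤ} (h : stmt11Cl a b c d e f) :
    stmt11Cl a b e f c d := by
  obtain ⟨c₁,c₂,c₃,c₁',c₂',c₃',d₁,d₂,d₃,d₁',d₂',d₃',h1,h2,h3,h4,h5⟩ := h
  exact ⟨c₁,c₃,c₂,c₁',c₃',c₂',d₁,d₃,d₂,d₁',d₃',d₂',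
    by linear_combination h1, by linear_combination h2, by linear_combination h3,
    by linear_combination h4, by linear_combination h5⟩

lemma stmt11Cl_p12 {a b c d e f : ℤ} (h : stmt11Cl a b c d e f) :
    stmt11Cl c d a b e f := by
  obtain ⟨c₁,c₂,c₃,c₁',c₂',c₃',d₁,d₂,d₃,d₁',d₂',d₃',h1,h2,h3,h4,h5⟩ := h
  exact ⟨c₂,c₁,c₃,c₂',c₁',c₃',d₂,d₁,d₃,d₂',d₁',d₃',
    by linear_combination h1, by linear_combination h2, by linear_combination h3,
    by linear_combination h4, by linear_combination h5⟩

lemma stmt11Cl_swap {a b c d e f : ℤ} (h : stmt11Cl a b c d e f) :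
    stmt11Cl b a d c f e := by
  obtain ⟨c₁,c₂,c₃,c₁',c₂',c₃',d₁,d₂,d₃,d₁',d₂',d₃',h1,h2,h3,h4,h5⟩ := h
  exact ⟨c₁',c₂',c₃',c₁,c₂,c₃,d₁',d₂',d₃',d₁,d₂,d₃,
    by linear_combination h1, by linear_combination h2, by linear_combination h3,
    by linear_combination h4, by linear_combination h5⟩

lemma stmt11Cl_block {Q₁ P₁ Q₂ P₂ Q₃ P₃ : ℤ} (p q r s : ℤ) (hdet : p*s - q*r = 1)
    (h : stmt11Cl (p*Q₁+q*Q₃) (s*P₁-r*P₃) Q₂ P₂ (r*Q₁+s*Q₃) (-(q*P₁)+p*P₃)) :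
    stmt11Cl Q₁ P₁ Q₂ P₂ Q₃ P₃ := by
  obtain ⟨c₁,c₂,c₃,c₁',c₂',c₃',d₁,d₂,d₃,d₁',d₂',d₃',h1,h2,h3,h4,h5⟩ := h
  refine ⟨c₁*p + c₃*r, c₂, c₁*q + c₃*s, c₁'*s - c₃'*q, c₂', -(c₁'*r) + c₃'*p,
          d₁*p + d₃*r, d₂, d₁*q + d₃*s, d₁'*s - d₃'*q, d₂', -(d₁'*r) + d₃'*p,
          ?_, ?_, ?_, ?_, ?_⟩
  · linear_combination h1 + (c₁*c₁' + c₃*c₃')*hdet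
  · linear_combination h2 + (d₁*d₁' + d₃*d₃')*hdet
  · linear_combination h3 + (c₁*d₁' + c₃*d₃' + c₁'*d₁ + c₃'*d₃)*hdet
  · linear_combination h4
  · linear_combination h5

lemma stmt11Cl_zero (x y z w : ℤ) : stmt11Cl x y z w 0 0 :=
  ⟨0,0,1,0,0,0, 0,0,0,0,0,1, by ring, by ring, by ring, by ring, by ring⟩

lemma stmt11Cl_all (Q₁ P₁ Q₂ P₂ Q₃ P₃ : ℤ) : stmt11Cl Q₁ P₁ Q₂ P₂ Q₃ P₃ := by
  obtain ⟨p₁,q₁,r₁,s₁,hd₁,hz₁⟩ := stmt11_sl2 Q₁ Q₃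
  apply stmt11Cl_block p₁ q₁ r₁ s₁ hd₁
  rw [hz₁]
  apply stmt11Cl_p23
  obtain ⟨p₂,q₂,r₂,s₂,hd₂,hz₂⟩ := stmt11_sl2 (p₁*Q₁+q₁*Q₃) Q₂
  apply stmt11Cl_block p₂ q₂ r₂ s₂ hd₂
  rw [hz₂]
  apply stmt11Cl_p12
  apply stmt11Cl_swap
  obtain ⟨p₃,q₃,r₃,s₃,hd₃,hz₃⟩ :=
    stmt11_sl2 (-(q₁*P₁)+p₁*P₃) (-(q₂*(s₁*P₁-r₁*P₃))+p₂*P₂)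
  apply stmt11Cl_block p₃ q₃ r₃ s₃ hd₃
  rw [hz₃]
  simpa using stmt11Cl_zero _ _ _ _

lemma stmt11_pair (Λ₀ : Type) [AddCommGroup Λ₀] [Module ℤ Λ₀]
    (B : Λ₀ →ₗ[ℤ] Λ₀ →ₗ[ℤ] ℤ)
    (hsymm : ∀ x y, B x y = B y x)
    (e f : Fin 3 → Λ₀)
    (hU : ∀ i j, B (e i) (e j) = 0 ∧ B (f i) (f j) = 0 ∧
      B (e i) (f j) = (if i = j then 1 else 0))
    (v : Λ₀) :
    ∃ e' f' : Λ₀, B e' e' = 0 ∧ B f' f' = 0 ∧ B e' f' = 1 ∧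
      B e' v = 0 ∧ B f' v = 0 := by
  have hee : ∀ i j, B (e i) (e j) = 0 := fun i j => (hU i j).1
  have hff : ∀ i j, B (f i) (f j) = 0 := fun i j => (hU i j).2.1
  have hef : ∀ i j, B (e i) (f j) = if i = j then 1 else 0 := fun i j => (hU i j).2.2
  have hfe : ∀ i j, B (f i) (e j) = if j = i then 1 else 0 := fun i j => by
    rw [hsymm]; exact hef j i
  obtain ⟨c₁,c₂,c₃,c₁',c₂',c₃',d₁,d₂,d₃,d₁',d₂',d₃',h1,h2,h3,h4,h5⟩ :=
    stmt11Cl_all (B (e 0) v) (B (f 0) v) (B (e 1) v) (B (f 1) v) (B (e 2) v) (B (f 2) v)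
  refine ⟨c₁•e 0 + c₂•e 1 + c₃•e 2 + c₁'•f 0 + c₂'•f 1 + c₃'•f 2,
          d₁•e 0 + d₂•e 1 + d₃•e 2 + d₁'•f 0 + d₂'•f 1 + d₃'•f 2, ?_, ?_, ?_, ?_, ?_⟩
  · simp only [map_add, map_zsmul, LinearMap.add_apply, LinearMap.smul_apply,
      zsmul_eq_mul, smul_eq_mul, hee, hff, hef, hfe]
    norm_num [Fin.ext_iff]
    linear_combination 2*h1
  · simp only [map_add, map_zsmul, LinearMap.add_apply, LinearMap.smul_apply,
      zsmul_eq_mul, smul_eq_mul, hee, hff, hef, hfe]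
    norm_num [Fin.ext_iff]
    linear_combination 2*h2
  · simp only [map_add, map_zsmul, LinearMap.add_apply, LinearMap.smul_apply,
      zsmul_eq_mul, smul_eq_mul, hee, hff, hef, hfe]
    norm_num [Fin.ext_iff]
    linear_combination h3
  · simp only [map_add, map_zsmul, LinearMap.add_apply, LinearMap.smul_apply,
      zsmul_eq_mul, smul_eq_mul, hee, hff, hef, hfe]
    norm_num [Fin.ext_iff]
    linear_combination h4
  · simp only [map_add, map_zsmul, LinearMap.add_apply, LinearMap.smul_apply,
      zsmul_eq_mul, smul_eq_mul, hee, hff, hef, hfe]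
    norm_num [Fin.ext_iff]
    linear_combination h5

set_option maxHeartbeats 1000000 in
/-- Proposition 4.8: in `Λ = Λ₀ ⊕ ℤδ` with `Λ₀` even unimodular containing three
orthogonal hyperbolic planes and `δ² = −2m̃`, for `h ∈ Λ` primitive of divisibility
`γ` and positive square, and integers `0 ≤ k ≤ m̃` and `l` such that some primitive
class with square `2l` and `κ_* = kδ_*` exists, there exists such a primitive `κ`
orthogonal to `h` iff `γ ∣ k`.  Here `mt` plays the role of `m̃`, `Λ` is modelled
as `Λ₀ × ℤ` with `δ = (0,1)`, divisibility is expressed via the ideal of pairing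
values, and `κ_* = kδ_*` via `κ/div(κ) − kδ/(2m̃) ∈ Λ` after clearing denominators. -/
theorem stmt_11 (Λ₀ : Type) [AddCommGroup Λ₀] [Module ℤ Λ₀]
    [Module.Free ℤ Λ₀] [Module.Finite ℤ Λ₀]
    (B : Λ₀ →ₗ[ℤ] Λ₀ →ₗ[ℤ] ℤ)
    (hsymm : ∀ x y, B x y = B y x)
    (heven : ∀ x, 2 ∣ B x x)
    (hunimod : Function.Bijective fun x => B x)
    (e f : Fin 3 → Λ₀)
    (hU : ∀ i j, B (e i) (e j) = 0 ∧ B (f i) (f j) = 0 ∧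
      B (e i) (f j) = (if i = j then 1 else 0))
    (mt : ℕ) (hmt : 1 ≤ mt)
    (Bl : Λ₀ × ℤ → Λ₀ × ℤ → ℤ)
    (hBl : ∀ w z, Bl w z = B w.1 z.1 - 2 * (mt : ℤ) * (w.2 * z.2))
    (h : Λ₀ × ℤ)
    (hprimh : ∀ (c : ℤ) (w : Λ₀ × ℤ), h = c • w → IsUnit c)
    (hpos : 0 < Bl h h)
    (γ : ℕ) (hγpos : 0 < γ)
    (hdivh : ∀ t : ℤ, ((γ : ℤ) ∣ t ↔ ∃ w, Bl h w = t))
    (k : ℕ) (hk : k ≤ mt) (l : ℤ)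
    (hexists : ∃ (κ : Λ₀ × ℤ) (γκ : ℕ), 0 < γκ ∧
      (∀ (c : ℤ) (w : Λ₀ × ℤ), κ = c • w → IsUnit c) ∧
      (∀ t : ℤ, ((γκ : ℤ) ∣ t ↔ ∃ w, Bl κ w = t)) ∧
      Bl κ κ = 2 * l ∧
      (∃ w : Λ₀ × ℤ, (2 * (mt : ℤ)) • κ - ((k : ℤ) * (γκ : ℤ)) • ((0 : Λ₀), (1 : ℤ))
        = ((2 * (mt : ℤ)) * (γκ : ℤ)) • w)) :
    (∃ (κ : Λ₀ × ℤ) (γκ : ℕ), 0 < γκ ∧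
      (∀ (c : ℤ) (w : Λ₀ × ℤ), κ = c • w → IsUnit c) ∧
      (∀ t : ℤ, ((γκ : ℤ) ∣ t ↔ ∃ w, Bl κ w = t)) ∧
      Bl κ κ = 2 * l ∧
      (∃ w : Λ₀ × ℤ, (2 * (mt : ℤ)) • κ - ((k : ℤ) * (γκ : ℤ)) • ((0 : Λ₀), (1 : ℤ))
        = ((2 * (mt : ℤ)) * (γκ : ℤ)) • w) ∧
      Bl κ h = 0) ↔ γ ∣ k := by
  have hmt1 : (1:ℤ) ≤ (mt:ℤ) := by exact_mod_cast hmt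
  have h2mt : (2*(mt:ℤ)) ≠ 0 := by intro hc; linarith [hc]
  have hγz : ((γ:ℤ)) ≠ 0 := by
    have : (0:ℤ) < (γ:ℤ) := by exact_mod_cast hγpos
    exact this.ne'
  haveI : Module.IsTorsionFree ℤ Λ₀ := inferInstance
  have zcancel : ∀ (n : ℤ) (x y : Λ₀), n ≠ 0 → n • x = n • y → x = y := by
    intro n x y hn hxy
    simp only [← Int.cast_smul_eq_zsmul ℤ, Int.cast_id] at hxy
    exact smul_right_injective Λ₀ hn hxy
  -- unpack hexists
  obtain ⟨κ₀, g, hgpos, hprim₀, hdiv₀, hsq₀, w₀, hw₀⟩ := hexists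
  have hgz : ((g:ℤ)) ≠ 0 := by
    have : (0:ℤ) < (g:ℤ) := by exact_mod_cast hgpos
    exact this.ne'
  have hw₀1 := congrArg Prod.fst hw₀
  have hw₀2 := congrArg Prod.snd hw₀
  simp only [Prod.fst_sub, Prod.snd_sub, Prod.smul_fst, Prod.smul_snd, zsmul_zero,
    smul_eq_mul, zsmul_eq_mul, mul_one, sub_zero] at hw₀1 hw₀2
  have hκ₀1 : κ₀.1 = (g:ℤ) • w₀.1 := by
    refine zcancel (2*(mt:ℤ)) _ _ h2mt ?_
    rw [hw₀1, mul_zsmul]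
  set c : ℤ := κ₀.2 - (g:ℤ) * w₀.2 with hc
  have h2mtc : 2*(mt:ℤ)*c = (k:ℤ)*(g:ℤ) := by rw [hc]; linarith [hw₀2]
  have hκ₀2 : κ₀.2 = (g:ℤ)*w₀.2 + c := by rw [hc]; ring
  have hgcd : Int.gcd (g:ℤ) c = 1 := by
    obtain ⟨g₂, hg₂⟩ : ((Int.gcd (g:ℤ) c : ℕ) : ℤ) ∣ (g:ℤ) := Int.gcd_dvd_left _ _
    obtain ⟨c₂, hc₂⟩ : ((Int.gcd (g:ℤ) c : ℕ) : ℤ) ∣ c := Int.gcd_dvd_right _ _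
    have heq : κ₀ = ((Int.gcd (g:ℤ) c : ℕ) : ℤ) • ((g₂ • w₀.1 : Λ₀), (g₂*w₀.2 + c₂ : ℤ)) := by
      rw [Prod.ext_iff]
      constructor
      · simp only [Prod.smul_fst]
        rw [hκ₀1]
        conv_lhs => rw [hg₂]
        rw [mul_zsmul]
      · simp only [Prod.smul_snd, smul_eq_mul, zsmul_eq_mul]
        linear_combination hκ₀2 + w₀.2*hg₂ + hc₂
    have hGunit := hprim₀ _ _ heq
    rcases Int.isUnit_iff.mp hGunit with h1 | h1
    · exact_mod_cast h1
    · omega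
  constructor
  · -- forward: existence of orthogonal κ implies γ ∣ k
    rintro ⟨κ, γκ, hγκpos, hprimκ, hdivκ, hsqκ, ⟨w, hw⟩, horth⟩
    have hγκz : ((γκ:ℤ)) ≠ 0 := by
      have : (0:ℤ) < (γκ:ℤ) := by exact_mod_cast hγκpos
      exact this.ne'
    have hw1 := congrArg Prod.fst hw
    have hw2 := congrArg Prod.snd hw
    simp only [Prod.fst_sub, Prod.snd_sub, Prod.smul_fst, Prod.smul_snd, zsmul_zero,
      smul_eq_mul, zsmul_eq_mul, mul_one, sub_zero] at hw1 hw2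
    have hκ1 : κ.1 = (γκ:ℤ) • w.1 := by
      refine zcancel (2*(mt:ℤ)) _ _ h2mt ?_
      rw [hw1, mul_zsmul]
    have horth' : B κ.1 h.1 - 2*(mt:ℤ)*(κ.2*h.2) = 0 := by rw [← hBl]; exact horth
    have e1 : B κ.1 h.1 = (γκ:ℤ) * B w.1 h.1 := by
      rw [hκ1]; simp only [map_zsmul, LinearMap.smul_apply, zsmul_eq_mul, smul_eq_mul]
    have key : (2*(mt:ℤ)*(γκ:ℤ)) * (B h.1 w.1 - 2*(mt:ℤ)*(h.2*w.2) - (k:ℤ)*h.2) = 0 := by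
      rw [hsymm h.1 w.1]
      linear_combination (2*(mt:ℤ))*horth' - (2*(mt:ℤ))*e1 + (2*(mt:ℤ)*h.2)*hw2
    have hfac : B h.1 w.1 - 2*(mt:ℤ)*(h.2*w.2) - (k:ℤ)*h.2 = 0 := by
      rcases mul_eq_zero.mp key with hk0 | hk0
      · exact absurd hk0 (mul_ne_zero h2mt hγκz)
      · exact hk0
    have hdka : (γ:ℤ) ∣ (k:ℤ)*h.2 := (hdivh _).mpr ⟨w, by rw [hBl]; linarith [hfac]⟩
    have hγB : ∀ x : Λ₀, (γ:ℤ) ∣ B h.1 x := fun x => (hdivh _).mpr ⟨(x, (0:ℤ)), by rw [hBl]; simp⟩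
    choose m hm using hγB
    let φ : Λ₀ →ₗ[ℤ] ℤ :=
      { toFun := m
        map_add' := by
          intro x y
          apply mul_left_cancel₀ hγz
          rw [← hm, map_add, hm, hm]; ring
        map_smul' := by
          intro r x
          simp only [RingHom.id_apply, smul_eq_mul]
          apply mul_left_cancel₀ hγz
          rw [← hm, (B h.1).map_smul r x, smul_eq_mul, hm]
          ring }
    obtain ⟨h₀', hh₀'⟩ := hunimod.2 φ
    have hBrepr : ∀ x, B h₀' x = m x := fun x => by
      have := congrArg (fun (F : Λ₀ →ₗ[ℤ] ℤ) => F x) hh₀'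
      exact this
    have hB' : ∀ x, B ((γ:ℤ)•h₀') x = (γ:ℤ) * B h₀' x := fun x => by
      simp only [map_zsmul, LinearMap.smul_apply, zsmul_eq_mul, smul_eq_mul]
    have hfact : h.1 = (γ:ℤ) • h₀' := by
      apply hunimod.1
      show B h.1 = B ((γ:ℤ)•h₀')
      ext x
      rw [hB' x, hBrepr x, hm x]
    obtain ⟨γ₂, hγ₂⟩ : ((Int.gcd (γ:ℤ) h.2 : ℕ) : ℤ) ∣ (γ:ℤ) := Int.gcd_dvd_left _ _
    obtain ⟨a₂, ha₂⟩ : ((Int.gcd (γ:ℤ) h.2 : ℕ) : ℤ) ∣ h.2 := Int.gcd_dvd_right _ _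
    have heqh : h = ((Int.gcd (γ:ℤ) h.2 : ℕ) : ℤ) • ((γ₂ • h₀' : Λ₀), a₂) := by
      rw [Prod.ext_iff]
      constructor
      · simp only [Prod.smul_fst]
        rw [hfact]
        conv_lhs => rw [hγ₂]
        rw [mul_zsmul]
      · simp only [Prod.smul_snd, smul_eq_mul, zsmul_eq_mul]
        exact ha₂
    have hGunit := hprimh _ _ heqh
    have hcop : Int.gcd (γ:ℤ) h.2 = 1 := by
      rcases Int.isUnit_iff.mp hGunit with h1 | h1
      · exact_mod_cast h1
      · omega
    have hdvdk : (γ:ℤ) ∣ (k:ℤ) := Int.dvd_of_dvd_mul_left_of_gcd_one hdka hcop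
    exact_mod_cast hdvdk
  · -- backward: γ ∣ k implies existence
    intro hγk
    have hdka : (γ:ℤ) ∣ (k:ℤ)*h.2 :=
      Dvd.dvd.mul_right (Int.natCast_dvd_natCast.mpr hγk) h.2
    obtain ⟨v, hv⟩ := (hdivh ((k:ℤ)*h.2)).mp hdka
    rw [hBl] at hv
    obtain ⟨e', f', hee', hff', hef', heh, hfh⟩ := stmt11_pair Λ₀ B hsymm e f hU h.1
    have hf'e' : B f' e' = 1 := by rw [hsymm]; exact hef'
    have hve : B v.1 e' = B e' v.1 := hsymm _ _
    have hvf : B v.1 f' = B f' v.1 := hsymm _ _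
    obtain ⟨m₁, hm₁⟩ := heven w₀.1
    obtain ⟨m₂, hm₂⟩ := heven v.1
    set J : ℤ := m₁ + (mt:ℤ)*(v.2^2 - w₀.2^2) + (k:ℤ)*(v.2 - w₀.2) - m₂ with hJdef
    have hJ : 2*J = B w₀.1 w₀.1 + 2*(mt:ℤ)*(v.2^2 - w₀.2^2) + 2*(k:ℤ)*(v.2 - w₀.2)
        - B v.1 v.1 := by
      rw [hJdef, hm₁, hm₂]; ring
    set α : ℤ := 1 - B f' v.1 with hα
    set β : ℤ := J - α * (B e' v.1) with hβ
    set w₁ : Λ₀ := v.1 + α • e' + β • f' with hw₁def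
    have hBw₁f' : B w₁ f' = 1 := by
      rw [hw₁def]
      simp only [map_add, map_zsmul, LinearMap.add_apply, LinearMap.smul_apply,
        zsmul_eq_mul, smul_eq_mul, hff', hef']
      linear_combination hvf + hα
    have hBw₁h : B w₁ h.1 = (k:ℤ)*h.2 + 2*(mt:ℤ)*(h.2*v.2) := by
      rw [hw₁def]
      simp only [map_add, map_zsmul, LinearMap.add_apply, LinearMap.smul_apply,
        zsmul_eq_mul, smul_eq_mul, heh, hfh]
      rw [hsymm v.1 h.1]
      linear_combination hv
    have hBw₁w₁ : B w₁ w₁ = B v.1 v.1 + 2*J := by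
      rw [hw₁def]
      simp only [map_add, map_zsmul, LinearMap.add_apply, LinearMap.smul_apply,
        zsmul_eq_mul, smul_eq_mul, hee', hff', hef', hf'e']
      linear_combination α*hve + β*hvf + 2*β*hα + 2*hβ
    have hκB : ∀ x, B ((g:ℤ)•w₁) x = (g:ℤ) * B w₁ x := fun x => by
      simp only [map_zsmul, LinearMap.smul_apply, zsmul_eq_mul, smul_eq_mul]
    refine ⟨(((g:ℤ) • w₁ : Λ₀), ((g:ℤ)*v.2 + c : ℤ)), g, hgpos, ?_, ?_, ?_, ?_, ?_⟩
    · -- primitivity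
      intro c' z hc'z
      have hz2 : (g:ℤ)*v.2 + c = c' * z.2 := by
        have := congrArg Prod.snd hc'z
        simpa [Prod.smul_snd, smul_eq_mul, zsmul_eq_mul] using this
      have h1 : Bl (((g:ℤ) • w₁ : Λ₀), ((g:ℤ)*v.2 + c : ℤ)) ((f', (0:ℤ))) = (g:ℤ) := by
        rw [hBl]
        dsimp only
        simp only [mul_zero, sub_zero]
        rw [hκB f', hBw₁f', mul_one]
      have h2 : Bl (((g:ℤ) • w₁ : Λ₀), ((g:ℤ)*v.2 + c : ℤ)) ((f', (0:ℤ)))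
          = c' * B z.1 f' := by
        rw [hc'z, hBl]
        simp only [Prod.smul_fst, Prod.smul_snd, smul_eq_mul, zsmul_eq_mul, mul_zero, sub_zero]
        simp only [map_zsmul, LinearMap.smul_apply, zsmul_eq_mul, smul_eq_mul]
      have hval : c' * B z.1 f' = (g:ℤ) := h2.symm.trans h1
      have hdc'g : c' ∣ (g:ℤ) := ⟨B z.1 f', hval.symm⟩
      have hdc'c : c' ∣ c := by
        have h3 : c' ∣ (g:ℤ)*v.2 + c := ⟨z.2, hz2⟩
        have h4 : c' ∣ (g:ℤ)*v.2 := hdc'g.mul_right v.2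
        have := dvd_sub h3 h4
        simpa using this
      have hd1 : c' ∣ ((Int.gcd (g:ℤ) c : ℕ) : ℤ) := Int.dvd_coe_gcd hdc'g hdc'c
      rw [hgcd] at hd1
      exact isUnit_of_dvd_one (by exact_mod_cast hd1)
    · -- divisibility ideal
      intro t
      constructor
      · rintro ⟨t', ht'⟩
        refine ⟨((t' • f' : Λ₀), (0:ℤ)), ?_⟩
        rw [hBl]
        dsimp only
        simp only [mul_zero, sub_zero]
        simp only [map_zsmul, LinearMap.smul_apply, zsmul_eq_mul, smul_eq_mul]
        rw [hBw₁f', ht']; ring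
      · rintro ⟨z, hz⟩
        refine ⟨B w₁ z.1 - 2*(mt:ℤ)*(v.2*z.2) - (k:ℤ)*z.2, ?_⟩
        rw [← hz, hBl]
        dsimp only
        rw [hκB z.1]
        linear_combination (-z.2)*h2mtc
    · -- square
      rw [hBl]
      have hgg : B ((g:ℤ)•w₁) ((g:ℤ)•w₁) = (g:ℤ)^2 * B w₁ w₁ := by
        simp only [map_zsmul, LinearMap.smul_apply, zsmul_eq_mul, smul_eq_mul]; ring
      rw [hgg, hBw₁w₁]
      have hBκ₀ : B κ₀.1 κ₀.1 = (g:ℤ)^2 * B w₀.1 w₀.1 := by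
        rw [hκ₀1]
        simp only [map_zsmul, LinearMap.smul_apply, zsmul_eq_mul, smul_eq_mul]; ring
      have hsq₀' := hsq₀
      rw [hBl] at hsq₀'
      have E0 : (g:ℤ)^2 * B w₀.1 w₀.1
          - 2*(mt:ℤ)*(((g:ℤ)*w₀.2 + c)*((g:ℤ)*w₀.2 + c)) = 2*l := by
        rw [← hBκ₀, ← hκ₀2]; exact hsq₀'
      linear_combination E0 + (g:ℤ)^2*hJ - 2*(g:ℤ)*(v.2 - w₀.2)*h2mtc
    · -- star condition
      refine ⟨((w₁ : Λ₀), v.2), ?_⟩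
      rw [Prod.ext_iff]
      constructor
      · simp only [Prod.fst_sub, Prod.smul_fst, zsmul_zero, sub_zero]
        conv_rhs => rw [mul_zsmul]
      · simp only [Prod.snd_sub, Prod.smul_snd, smul_eq_mul, zsmul_eq_mul, mul_one]
        linear_combination h2mtc
    · -- orthogonality
      rw [hBl]
      rw [hκB h.1, hBw₁h]
      linear_combination (-h.2)*h2mtc
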